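/- Let X and Y be connected subsets of (ℤ, c₁) and f: X → Y a continuous surjection. Then f is shy if and only if f is monotone non-decreasing or monotone non-increasing. -/

import Mathlib

/-- A subset `A` is connected under adjacency `κ` if any two of its points are
joined by a path within `A` whose consecutive points are `κ`-adjacent. -/
def DConn {X : Type*} (κ : X → X → Prop) (A : Set X) : Prop :=
  ∀ a ∈ A, ∀ b ∈ A,
    Relation.ReflTransGen (fun u v => κ u v ∧ u ∈ A ∧ v ∈ A) a b

/-- `f` is digitally continuous if images of connected sets are connected. -/
def DCont {X Y : Type*} (κ : X → X → Prop) (lam : Y → Y → Prop) (f : X → Y) : Prop :=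
  ∀ A : Set X, DConn κ A → DConn lam (f '' A)

/-- `f` is shy: a continuous surjection with connected point preimages and
connected preimages of adjacent pairs. -/
def DShy {X Y : Type*} (κ : X → X → Prop) (lam : Y → Y → Prop) (f : X → Y) : Prop :=
  DCont κ lam f ∧ Function.Surjective f ∧
    (∀ y : Y, DConn κ (f ⁻¹' {y})) ∧
    ∀ y₀ y₁ : Y, lam y₀ y₁ → DConn κ (f ⁻¹' {y₀, y₁})

/-- The `c₁`-adjacency on ℤ. -/
def c1 : ℤ → ℤ → Prop := fun a b => |a - b| = 1

lemma c1_iff {a b : ℤ} : c1 a b ↔ (a - b = 1 ∨ a - b = -1) := by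
  unfold c1; exact abs_eq (by norm_num)

lemma cross {A : Set ℤ} {a b : ℤ} (ha : a ∈ A)
    (h : Relation.ReflTransGen (fun u v => c1 u v ∧ u ∈ A ∧ v ∈ A) a b) :
    ∀ m : ℤ, (a ≤ m ∧ m ≤ b) ∨ (b ≤ m ∧ m ≤ a) → m ∈ A := by
  induction h with
  | refl => intro m hm; have : m = a := (by omega); subst this; exact ha
  | tail _ hstep ih =>
    rename_i c b _
    obtain ⟨h1, _, hbA⟩ := hstep
    intro m hm
    by_cases hmb : m = b
    · subst hmb; exact hbA
    · rcases c1_iff.mp h1 with h | h <;> exact ih m (by omega)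

lemma crossX {X : Set ℤ} {A : Set X} {a b : X} (ha : a ∈ A)
    (h : Relation.ReflTransGen (fun u v : X => c1 u.1 v.1 ∧ u ∈ A ∧ v ∈ A) a b) :
    ∀ m : X, (a.1 ≤ m.1 ∧ m.1 ≤ b.1) ∨ (b.1 ≤ m.1 ∧ m.1 ≤ a.1) → m ∈ A := by
  induction h with
  | refl =>
    intro m hm
    have : m = a := Subtype.ext (by omega)
    subst this; exact ha
  | tail _ hstep ih =>
    rename_i c b _
    obtain ⟨h1, _, hbA⟩ := hstep
    intro m hm
    by_cases hmb : m = b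
    · subst hmb; exact hbA
    · have hmb' : m.1 ≠ b.1 := fun h => hmb (Subtype.ext h)
      rcases c1_iff.mp h1 with h | h <;> exact ih m (by omega)

lemma twopt {Y : Set ℤ} {p q : Y} {S : Set Y} (hS : S ⊆ {p, q})
    (h : Relation.ReflTransGen (fun u v : Y => c1 u.1 v.1 ∧ u ∈ S ∧ v ∈ S) p q) :
    p = q ∨ c1 p.1 q.1 := by
  rcases h.cases_tail with heq | ⟨c, _, hc1, hcS, _⟩
  · exact Or.inl heq.symm
  · rcases hS hcS with rfl | rfl
    · exact Or.inr hc1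
    · exfalso; rcases c1_iff.mp hc1 with h | h <;> omega

theorem shy_into_Z_iff_monotone (X Y : Set ℤ)
    (hX : DConn c1 X) (hY : DConn c1 Y)
    (f : X → Y)
    (hcont : DCont (fun a b : X => c1 a.1 b.1) (fun a b : Y => c1 a.1 b.1) f)
    (hsurj : Function.Surjective f) :
    DShy (fun a b : X => c1 a.1 b.1) (fun a b : Y => c1 a.1 b.1) f ↔
      (Monotone f ∨ Antitone f) := by
  -- X is an interval
  have hXI : ∀ a b m : ℤ, a ∈ X → b ∈ X → a ≤ m → m ≤ b → m ∈ X := by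
    intro a b m ha hb h1 h2
    exact cross ha (hX a ha b hb) m (Or.inl ⟨h1, h2⟩)
  -- pointwise continuity
  have hstep : ∀ u v : X, v.1 = u.1 + 1 →
      (f v).1 = (f u).1 + 1 ∨ (f v).1 = (f u).1 ∨ (f v).1 = (f u).1 - 1 := by
    intro u v huv
    have hA : DConn (fun a b : X => c1 a.1 b.1) ({u, v} : Set X) := by
      have hc : c1 u.1 v.1 := c1_iff.mpr (by omega)
      have hc' : c1 v.1 u.1 := c1_iff.mpr (by omega)
      intro a ha b hb
      have hu : u ∈ ({u, v} : Set X) := Set.mem_insert _ _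
      have hv : v ∈ ({u, v} : Set X) := Set.mem_insert_of_mem _ rfl
      simp only [Set.mem_insert_iff, Set.mem_singleton_iff] at ha hb
      rcases ha with rfl | rfl <;> rcases hb with rfl | rfl
      · exact Relation.ReflTransGen.refl
      · exact Relation.ReflTransGen.single ⟨hc, hu, hv⟩
      · exact Relation.ReflTransGen.single ⟨hc', hv, hu⟩
      · exact Relation.ReflTransGen.refl
    have himg := hcont _ hA
    have hfu : f u ∈ f '' ({u, v} : Set X) := ⟨u, Set.mem_insert _ _, rfl⟩
    have hfv : f v ∈ f '' ({u, v} : Set X) := ⟨v, Set.mem_insert_of_mem _ rfl, rfl⟩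
    have hpath := himg (f u) hfu (f v) hfv
    have hsub : f '' ({u, v} : Set X) ⊆ {f u, f v} := by
      rw [Set.image_pair]
    rcases twopt hsub hpath with heq | hadj
    · right; left; rw [heq]
    · rcases c1_iff.mp hadj with h | h
      · right; right; omega
      · left; omega
  constructor
  · -- shy → monotone or antitone
    rintro ⟨-, -, hpre, -⟩
    -- level sets are convex
    have L : ∀ a b c : X, a.1 ≤ b.1 → b.1 ≤ c.1 → f a = f c → f b = f a := by
      intro a b c hab hbc hac
      have ha : a ∈ f ⁻¹' {f a} := rfl
      have hc : c ∈ f ⁻¹' {f a} := by simp [Set.mem_preimage, hac]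
      exact crossX ha (hpre (f a) a ha c hc) b (Or.inl ⟨hab, hbc⟩)
    -- up-step followed (weakly later) by down-step is impossible
    have key : ∀ n : ℕ, ∀ u w u' v' : X, u.1 < w.1 → w.1 ≤ u'.1 → v'.1 = u'.1 + 1 →
        (f w).1 = (f u).1 + 1 → (f v').1 = (f u').1 - 1 → u'.1 - w.1 = (n : ℤ) → False := by
      intro n
      induction n with
      | zero =>
        intro u w u' v' h1 h2 h3 h4 h5 hn
        have hwu' : w = u' := Subtype.ext (by omega)
        subst hwu'
        have : f w = f u := L u w v' (by omega) (by omega) (Subtype.ext (by omega)).symm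
        have := congrArg Subtype.val this
        omega
      | succ n ih =>
        intro u w u' v' h1 h2 h3 h4 h5 hn
        have hw2X : w.1 + 1 ∈ X := hXI w.1 u'.1 (w.1 + 1) w.2 u'.2 (by omega) (by omega)
        set w₂ : X := ⟨w.1 + 1, hw2X⟩ with hw₂
        have hw₂v : w₂.1 = w.1 + 1 := rfl
        have hst := hstep w w₂ rfl
        rcases hst with h | h | h
        · exact ih w w₂ u' v' (by omega) (by omega) h3 (by omega) h5 (by omega)
        · exact ih u w₂ u' v' (by omega) (by omega) h3 (by omega) h5 (by omega)
        · have : f w = f u := L u w w₂ (by omega) (by omega) (Subtype.ext (by omega)).symm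
          have := congrArg Subtype.val this
          omega
    -- down-step followed (weakly later) by up-step is impossible
    have key2 : ∀ n : ℕ, ∀ u w u' v' : X, u.1 < w.1 → w.1 ≤ u'.1 → v'.1 = u'.1 + 1 →
        (f w).1 = (f u).1 - 1 → (f v').1 = (f u').1 + 1 → u'.1 - w.1 = (n : ℤ) → False := by
      intro n
      induction n with
      | zero =>
        intro u w u' v' h1 h2 h3 h4 h5 hn
        have hwu' : w = u' := Subtype.ext (by omega)
        subst hwu'
        have : f w = f u := L u w v' (by omega) (by omega) (Subtype.ext (by omega)).symm
        have := congrArg Subtype.val this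
        omega
      | succ n ih =>
        intro u w u' v' h1 h2 h3 h4 h5 hn
        have hw2X : w.1 + 1 ∈ X := hXI w.1 u'.1 (w.1 + 1) w.2 u'.2 (by omega) (by omega)
        set w₂ : X := ⟨w.1 + 1, hw2X⟩ with hw₂
        have hw₂v : w₂.1 = w.1 + 1 := rfl
        have hst := hstep w w₂ rfl
        rcases hst with h | h | h
        · have : f w = f u := L u w w₂ (by omega) (by omega) (Subtype.ext (by omega)).symm
          have := congrArg Subtype.val this
          omega
        · exact ih u w₂ u' v' (by omega) (by omega) h3 (by omega) h5 (by omega)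
        · exact ih w w₂ u' v' (by omega) (by omega) h3 (by omega) h5 (by omega)
    -- from a decreasing pair, find a down-step
    have finddown : ∀ n : ℕ, ∀ x y : X, y.1 = x.1 + (n : ℤ) → (f y).1 < (f x).1 →
        ∃ u v : X, v.1 = u.1 + 1 ∧ (f v).1 = (f u).1 - 1 := by
      intro n
      induction n with
      | zero => intro x y h1 h2; have : y = x := Subtype.ext (by omega); subst this; omega
      | succ n ih =>
        intro x y h1 h2
        have hzX : x.1 + 1 ∈ X := hXI x.1 y.1 (x.1 + 1) x.2 y.2 (by omega) (by omega)
        set z : X := ⟨x.1 + 1, hzX⟩ with hz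
        have hzv : z.1 = x.1 + 1 := rfl
        rcases hstep x z rfl with h | h | h
        · exact ih z y (by omega) (by omega)
        · exact ih z y (by omega) (by omega)
        · exact ⟨x, z, rfl, by omega⟩
    have findup : ∀ n : ℕ, ∀ x y : X, y.1 = x.1 + (n : ℤ) → (f x).1 < (f y).1 →
        ∃ u v : X, v.1 = u.1 + 1 ∧ (f v).1 = (f u).1 + 1 := by
      intro n
      induction n with
      | zero => intro x y h1 h2; have : y = x := Subtype.ext (by omega); subst this; omega
      | succ n ih =>
        intro x y h1 h2
        have hzX : x.1 + 1 ∈ X := hXI x.1 y.1 (x.1 + 1) x.2 y.2 (by omega) (by omega)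
        set z : X := ⟨x.1 + 1, hzX⟩ with hz
        have hzv : z.1 = x.1 + 1 := rfl
        rcases hstep x z rfl with h | h | h
        · exact ⟨x, z, rfl, by omega⟩
        · exact ih z y (by omega) (by omega)
        · exact ih z y (by omega) (by omega)
    by_cases hdown : ∃ u v : X, v.1 = u.1 + 1 ∧ (f v).1 = (f u).1 - 1
    · -- then no up-step can exist, and f is antitone
      obtain ⟨u₁, v₁, hv₁, hd⟩ := hdown
      right
      intro a b hab
      by_contra hfb
      have hab' : a.1 ≤ b.1 := hab
      have hfb' : (f a).1 < (f b).1 := by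
        have := lt_of_not_ge hfb
        exact this
      have hne : a.1 < b.1 := by
        rcases eq_or_lt_of_le hab' with h | h
        · exfalso; have : a = b := Subtype.ext h; subst this; omega
        · exact h
      obtain ⟨u₂, v₂, hv₂, hu⟩ := findup (b.1 - a.1).toNat a b (by omega) hfb'
      -- up-step (u₂,v₂), down-step (u₁,v₁)
      rcases lt_trichotomy u₂.1 u₁.1 with h | h | h
      · exact key (u₁.1 - v₂.1).toNat u₂ v₂ u₁ v₁ (by omega) (by omega) hv₁ (by omega)
          (by omega) (by omega)
      · have : u₂ = u₁ := Subtype.ext h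
        subst this
        have : v₂ = v₁ := Subtype.ext (by omega)
        subst this
        omega
      · exact key2 (u₂.1 - v₁.1).toNat u₁ v₁ u₂ v₂ (by omega) (by omega) hv₂ (by omega)
          (by omega) (by omega)
    · -- no down-step: f is monotone
      left
      intro a b hab
      by_contra hfb
      have hab' : a.1 ≤ b.1 := hab
      have hfb' : (f b).1 < (f a).1 := lt_of_not_ge hfb
      have hne : a.1 < b.1 := by
        rcases eq_or_lt_of_le hab' with h | h
        · exfalso; have : a = b := Subtype.ext h; subst this; omega
        · exact h
      exact hdown (finddown (b.1 - a.1).toNat a b (by omega) hfb')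
  · -- monotone or antitone → shy
    intro hmono
    have rsymm : ∀ A : Set X, Symmetric (fun u v : X => c1 u.1 v.1 ∧ u ∈ A ∧ v ∈ A) := by
      intro A u v ⟨h1, h2, h3⟩
      exact ⟨c1_iff.mpr (by rcases c1_iff.mp h1 with h | h <;> omega), h3, h2⟩
    have conv2conn : ∀ A : Set X,
        (∀ a ∈ A, ∀ c ∈ A, ∀ b : X, a.1 ≤ b.1 → b.1 ≤ c.1 → b ∈ A) →
        DConn (fun a b : X => c1 a.1 b.1) A := by
      intro A hconv
      have walk : ∀ n : ℕ, ∀ a b : X, a ∈ A → b ∈ A → b.1 = a.1 + (n : ℤ) →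
          Relation.ReflTransGen (fun u v : X => c1 u.1 v.1 ∧ u ∈ A ∧ v ∈ A) a b := by
        intro n
        induction n with
        | zero =>
          intro a b _ hb h
          have : b = a := Subtype.ext (by omega)
          subst this; exact Relation.ReflTransGen.refl
        | succ n ih =>
          intro a b ha hb h
          have ha2X : a.1 + 1 ∈ X := hXI a.1 b.1 (a.1 + 1) a.2 b.2 (by omega) (by omega)
          set a₂ : X := ⟨a.1 + 1, ha2X⟩ with ha₂
          have ha₂v : a₂.1 = a.1 + 1 := rfl
          have ha2A : a₂ ∈ A := hconv a ha b hb a₂ (by omega) (by omega)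
          exact Relation.ReflTransGen.head ⟨c1_iff.mpr (by omega), ha, ha2A⟩
            (ih a₂ b ha2A hb (by omega))
      intro a ha b hb
      rcases le_total a.1 b.1 with h | h
      · exact walk (b.1 - a.1).toNat a b ha hb (by omega)
      · exact ((@Relation.ReflTransGen.stdSymm _ _ ⟨fun _ _ h => rsymm A h⟩).symm _ _)
          (walk (a.1 - b.1).toNat b a hb ha (by omega))
    have hcmp : ∀ a b c : X, a.1 ≤ b.1 → b.1 ≤ c.1 →
        ((f a).1 ≤ (f b).1 ∧ (f b).1 ≤ (f c).1) ∨
        ((f c).1 ≤ (f b).1 ∧ (f b).1 ≤ (f a).1) := by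
      intro a b c h1 h2
      have hab : a ≤ b := h1
      have hbc : b ≤ c := h2
      rcases hmono with hm | hm
      · exact Or.inl ⟨hm hab, hm hbc⟩
      · exact Or.inr ⟨hm hbc, hm hab⟩
    refine ⟨hcont, hsurj, ?_, ?_⟩
    · intro y
      apply conv2conn
      intro a ha c hc b h1 h2
      have ha' : f a = y := ha
      have hc' : f c = y := hc
      have h3 := hcmp a b c h1 h2
      have ha'' := congrArg Subtype.val ha'
      have hc'' := congrArg Subtype.val hc'
      have : f b = y := Subtype.ext (by omega)
      exact this
    · intro y₀ y₁ hadj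
      apply conv2conn
      intro a ha c hc b h1 h2
      have hd := c1_iff.mp hadj
      have h3 := hcmp a b c h1 h2
      have ha' : (f a).1 = y₀.1 ∨ (f a).1 = y₁.1 := by
        rcases ha with h | h
        · left; exact congrArg Subtype.val h
        · right; exact congrArg Subtype.val h
      have hc' : (f c).1 = y₀.1 ∨ (f c).1 = y₁.1 := by
        rcases hc with h | h
        · left; exact congrArg Subtype.val h
        · right; exact congrArg Subtype.val h
      have : (f b).1 = y₀.1 ∨ (f b).1 = y₁.1 := by omega
      rcases this with h | h
      · exact Or.inl (Subtype.ext h)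
      · exact Or.inr (Subtype.ext h)
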